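/- For a simple Toeplitz word p^(∞), the condition (PQ) holds with constant 1/8: for every j ≥ 1, liminf_{L→∞} (j/L)·#_nonoverlap(p^(∞)[1..j], p^(∞)[1..L]) ≥ 1/8. -/

import Mathlib

/-- The palindromic blocks of a simple Toeplitz word: `pBlock a n (k+1)` is the paper's
`p^(k)`. -/
def pBlock {A : Type*} (a : ℕ → A) (n : ℕ → ℕ) : ℕ → List A
  | 0 => []
  | k + 1 => (List.replicate (n k - 1) (pBlock a n k ++ [a k])).flatten ++ pBlock a n k

/-- The one-sided infinite limit word `p^(∞)` of the nested blocks `p^(k)`. -/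
def pInf {A : Type*} (a : ℕ → A) (n : ℕ → ℕ) : ℕ → A :=
  fun i => (pBlock a n (i + 2)).getD i (a 0)

/-- The prefix of length `L` of a one-sided infinite word. -/
def prefixWord {A : Type*} (ρ : ℕ → A) (L : ℕ) : List A := List.ofFn fun i : Fin L => ρ i

/-- `u` occurs in `v` starting at position `s`. -/
def occursAt {A : Type*} (u v : List A) (s : ℕ) : Prop :=
  s + u.length ≤ v.length ∧ (v.drop s).take u.length = u

/-- The maximal number of pairwise non-overlapping occurrences of `u` in `v`. -/
noncomputable def nonoverlap {A : Type*} (u v : List A) : ℕ :=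
  sSup {m : ℕ | ∃ S : Finset ℕ, S.card = m ∧ (∀ s ∈ S, occursAt u v s) ∧
    ∀ s ∈ S, ∀ t ∈ S, s ≠ t → s + u.length ≤ t ∨ t + u.length ≤ s}

namespace STPQ

variable {A : Type*} (a : ℕ → A) (n : ℕ → ℕ)

def ell (k : ℕ) : ℕ := (pBlock a n k).length + 1

def pw (k m : ℕ) : List A := (List.replicate m (pBlock a n k ++ [a k])).flatten

lemma ell_zero : ell a n 0 = 1 := rfl

lemma pw_length (k m : ℕ) : (pw a n k m).length = m * ell a n k := by
  simp [pw, ell, List.length_flatten, mul_comm]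

lemma pw_add (k m m' : ℕ) : pw a n k (m + m') = pw a n k m ++ pw a n k m' := by
  unfold pw
  rw [List.replicate_add]
  exact List.flatten_append

lemma pw_one (k : ℕ) : pw a n k 1 = pBlock a n k ++ [a k] := by
  simp [pw]

lemma pBlock_succ_eq (k : ℕ) :
    pBlock a n (k+1) = pw a n k (n k - 1) ++ pBlock a n k := rfl

lemma ell_succ (k : ℕ) (h2 : 2 ≤ n k) : ell a n (k+1) = n k * ell a n k := by
  have h : (pBlock a n (k+1)).length = (n k - 1) * ell a n k + (pBlock a n k).length := by
    rw [pBlock_succ_eq, List.length_append, pw_length]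
  have h3 : (n k - 1) * ell a n k + ell a n k = n k * ell a n k := by
    have h4 : n k - 1 + 1 = n k := by omega
    calc (n k - 1) * ell a n k + ell a n k = (n k - 1 + 1) * ell a n k := by rw [add_one_mul]
    _ = n k * ell a n k := by rw [h4]
  unfold ell at *
  omega

lemma ell_pos (k : ℕ) : 0 < ell a n k := Nat.succ_pos _

lemma pBlock_append_pw (k : ℕ) (h2 : 2 ≤ n k) :
    pBlock a n (k+1) ++ [a k] = pw a n k (n k) := by
  have h : n k = (n k - 1) + 1 := by omega
  rw [pBlock_succ_eq]
  conv_rhs => rw [h]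
  rw [pw_add, pw_one, List.append_assoc]

lemma take_pw (k j m m' : ℕ) (h : j ≤ m * ell a n k) (hm : m ≤ m') :
    (pw a n k m').take j = (pw a n k m).take j := by
  rw [show m' = m + (m' - m) by omega, pw_add,
    List.take_append_of_le_length (by rw [pw_length]; exact h)]


lemma occursAt_mono_prefix {u v v' : List A} {s : ℕ} (h : occursAt u v s)
    (hp : v <+: v') : occursAt u v' s := by
  obtain ⟨w, rfl⟩ := hp
  obtain ⟨h1, h2⟩ := h
  refine ⟨by rw [List.length_append]; omega, ?_⟩
  rw [List.drop_append_of_le_length (by omega),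
    List.take_append_of_le_length (by rw [List.length_drop]; omega), h2]

lemma occursAt_take {u v : List A} {s L : ℕ} (h : occursAt u v s)
    (hL : s + u.length ≤ L) : occursAt u (v.take L) s := by
  obtain ⟨h1, h2⟩ := h
  refine ⟨by rw [List.length_take]; omega, ?_⟩
  rw [List.drop_take, List.take_take, min_eq_left (by omega), h2]

lemma occursAt_trans {u w v : List A} {r s : ℕ} (h1 : occursAt u w r)
    (h2 : occursAt w v s) : occursAt u v (s + r) := by
  obtain ⟨hw1, hw2⟩ := h1
  obtain ⟨hv1, hv2⟩ := h2
  refine ⟨by omega, ?_⟩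
  have h3 : ((v.drop s).drop r).take (w.length - r) = w.drop r := by
    conv_rhs => rw [← hv2]
    rw [List.drop_take]
  calc (v.drop (s+r)).take u.length
      = ((v.drop s).drop r).take u.length := by rw [List.drop_drop]
    _ = (((v.drop s).drop r).take (w.length - r)).take u.length := by
        rw [List.take_take, min_eq_left (by omega)]
    _ = (w.drop r).take u.length := by rw [h3]
    _ = u := hw2

lemma occursAt_take_pBlock (k : ℕ) (h2 : 2 ≤ n k) (j r : ℕ)
    (hj : r * ell a n k + j ≤ (pBlock a n (k+1)).length) :
    occursAt ((pBlock a n (k+1)).take j) (pBlock a n (k+1)) (r * ell a n k) := by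
  set ℓ := ell a n k with hℓdef
  set P := pBlock a n (k+1) with hPdef
  set W := pw a n k (n k) with hWdef
  have hPW : P ++ [a k] = W := pBlock_append_pw a n k h2
  have hℓeq : ℓ = (pBlock a n k).length + 1 := rfl
  have hlen : P.length + 1 = n k * ℓ := ell_succ a n k h2
  have hℓpos : 0 < ℓ := ell_pos a n k
  have hPtake : P = W.take P.length := by rw [← hPW, List.take_left]
  have hjP : j ≤ P.length := by omega
  have hulen : (P.take j).length = j := by rw [List.length_take]; omega
  have hrn : r ≤ n k := by
    by_contra hc
    push_neg at hc
    have : n k * ℓ ≤ r * ℓ := Nat.mul_le_mul_right _ (by omega)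
    omega
  have hsub : (n k - r) * ℓ = n k * ℓ - r * ℓ := Nat.sub_mul _ _ _
  have hjr : j ≤ (n k - r) * ℓ := by omega
  have hdrop : W.drop (r * ℓ) = pw a n k (n k - r) := by
    have hsp : W = pw a n k r ++ pw a n k (n k - r) := by
      rw [hWdef, ← pw_add, Nat.add_sub_cancel' hrn]
    have hlr : r * ℓ = (pw a n k r).length := (pw_length a n k r).symm
    rw [hsp, hlr, List.drop_left]
  have key : (P.drop (r * ℓ)).take j = W.take j := by
    conv_lhs => rw [hPtake]
    rw [List.drop_take, List.take_take, min_eq_left (by omega), hdrop]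
    exact (take_pw a n k j (n k - r) (n k) hjr (by omega)).symm
  refine ⟨by rw [hulen]; omega, ?_⟩
  rw [hulen, key, hPtake, List.take_take, min_eq_left hjP]

lemma pBlock_prefix_succ (k : ℕ) (h2 : 2 ≤ n k) :
    pBlock a n k <+: pBlock a n (k+1) := by
  rw [pBlock_succ_eq, show n k - 1 = (n k - 2) + 1 by omega]
  refine ⟨[a k] ++ pw a n k (n k - 2) ++ pBlock a n k, ?_⟩
  rw [show (n k - 2) + 1 = 1 + (n k - 2) by omega, pw_add, pw_one]
  simp

lemma pBlock_prefix (hn : ∀ k, 2 ≤ n k) {k M : ℕ} (h : k ≤ M) :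
    pBlock a n k <+: pBlock a n M := by
  induction M, h using Nat.le_induction with
  | base => exact List.prefix_refl _
  | succ M hM ih => exact ih.trans (pBlock_prefix_succ a n M (hn M))

lemma length_lt_succ (hn : ∀ k, 2 ≤ n k) (k : ℕ) :
    (pBlock a n k).length < (pBlock a n (k+1)).length := by
  have h1 := ell_succ a n k (hn k)
  have h2 := hn k
  have h3 : 2 * ell a n k ≤ n k * ell a n k := Nat.mul_le_mul_right _ h2
  unfold ell at *
  omega

lemma length_strictMono (hn : ∀ k, 2 ≤ n k) :
    StrictMono (fun k => (pBlock a n k).length) :=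
  strictMono_nat_of_lt_succ (length_lt_succ a n hn)

lemma self_le_length (hn : ∀ k, 2 ≤ n k) (k : ℕ) : k ≤ (pBlock a n k).length + 1 := by
  induction k with
  | zero => omega
  | succ k ih =>
    have := length_lt_succ a n hn k
    omega

lemma ell_dvd (hn : ∀ k, 2 ≤ n k) {k M : ℕ} (h : k ≤ M) :
    ell a n k ∣ ell a n M := by
  induction M, h using Nat.le_induction with
  | base => rfl
  | succ M hM ih => rw [ell_succ a n M (hn M)]; exact ih.mul_left _

lemma occursAt_pBlock_mul (hn : ∀ k, 2 ≤ n k) :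
    ∀ M k q, q * ell a n k + (pBlock a n k).length ≤ (pBlock a n M).length →
    occursAt (pBlock a n k) (pBlock a n M) (q * ell a n k) := by
  intro M
  induction M with
  | zero =>
    intro k q h
    have h0 : (pBlock a n 0).length = 0 := rfl
    have hℓ := ell_pos a n k
    have hq : q * ell a n k = 0 := by omega
    have hk : pBlock a n k = [] := List.length_eq_zero_iff.mp (by omega)
    rw [hq, hk]
    exact ⟨by simp, by simp⟩
  | succ M IH =>
    intro k q h
    by_cases hcase : q * ell a n k + (pBlock a n k).length ≤ (pBlock a n M).length
    · exact occursAt_mono_prefix (IH k q hcase) (pBlock_prefix_succ a n M (hn M))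
    · push_neg at hcase
      rcases le_or_gt k M with hkM | hkM
      · obtain ⟨D, hD⟩ := ell_dvd a n hn hkM
        set ℓ := ell a n k with hℓdef
        set LM := ell a n M with hLMdef
        have hℓpos : 0 < ℓ := ell_pos a n k
        have hLMpos : 0 < LM := ell_pos a n M
        have hDpos : 0 < D := by
          rcases Nat.eq_zero_or_pos D with h0 | h0
          · rw [h0, mul_zero] at hD; omega
          · exact h0
        set r := q / D with hrdef
        set q' := q % D with hq'def
        have hq : q = r * D + q' := by rw [hrdef, hq'def, mul_comm]; exact (Nat.div_add_mod q D).symm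
        have hq'D : q' < D := Nat.mod_lt _ hDpos
        have hsplit : q * ℓ = r * LM + q' * ℓ := by
          rw [hD]
          calc q * ℓ = (r * D + q') * ℓ := by rw [← hq]
          _ = r * (ℓ * D) + q' * ℓ := by ring
        have hℓeq : ℓ = (pBlock a n k).length + 1 := rfl
        have hLMeq : LM = (pBlock a n M).length + 1 := rfl
        have hcomm : ℓ * D = D * ℓ := by ring
        have hsub : (D - 1) * ℓ = D * ℓ - ℓ := by rw [Nat.sub_mul, one_mul]
        have hq'le : q' * ℓ ≤ (D - 1) * ℓ := Nat.mul_le_mul_right _ (by omega)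
        have hellM : LM = ℓ * D := hD
        have hq1 : (q' + 1) * ℓ ≤ D * ℓ := Nat.mul_le_mul_right _ (by omega)
        have hq1' : q' * ℓ + ℓ ≤ D * ℓ := by rw [add_one_mul] at hq1; omega
        have h1 : q' * ℓ + (pBlock a n k).length ≤ (pBlock a n M).length := by omega
        have occ1 := IH k q' h1
        have hellM1 : ell a n (M+1) = n M * LM := ell_succ a n M (hn M)
        have hrq : r * LM ≤ q * ℓ := by omega
        have hL1eq : ell a n (M+1) = (pBlock a n (M+1)).length + 1 := rfl
        have hrn : r < n M := by
          by_contra hc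
          push_neg at hc
          have : n M * LM ≤ r * LM := Nat.mul_le_mul_right _ hc
          omega
        have h2 : r * LM + (pBlock a n M).length ≤ (pBlock a n (M+1)).length := by
          have h5 : (r + 1) * LM ≤ n M * LM := Nat.mul_le_mul_right _ (by omega)
          have hadd : (r + 1) * LM = r * LM + LM := by ring
          omega
        have occ2 : occursAt (pBlock a n M) (pBlock a n (M+1)) (r * LM) := by
          have hocc := occursAt_take_pBlock a n M (hn M) (pBlock a n M).length r h2
          obtain ⟨w, hw⟩ := pBlock_prefix_succ a n M (hn M)
          have htake : (pBlock a n (M+1)).take (pBlock a n M).length = pBlock a n M := by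
            rw [← hw, List.take_left]
          rw [htake, ← hLMdef] at hocc
          exact hocc
        rw [hsplit]
        exact occursAt_trans occ1 occ2
      · have hkM1 : k = M + 1 := by
          by_contra hc
          have hlt : M + 1 < k := by omega
          have := length_strictMono a n hn hlt
          simp only at this
          omega
        subst hkM1
        have hq : q * ell a n (M+1) = 0 := by
          have := ell_pos a n (M+1)
          omega
        rw [hq]
        exact ⟨by simp, by simp⟩



lemma length_prefixWord (ρ : ℕ → A) (L : ℕ) : (prefixWord ρ L).length = L := by
  simp [prefixWord]

lemma lt_length_self (hn : ∀ k, 2 ≤ n k) (i : ℕ) : i < (pBlock a n (i + 2)).length := by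
  have := self_le_length a n hn (i + 2)
  omega

lemma pInf_eq_getElem (hn : ∀ k, 2 ≤ n k) (i M : ℕ) (hi : i < (pBlock a n M).length) :
    pInf a n i = (pBlock a n M)[i] := by
  unfold pInf
  have hi2 : i < (pBlock a n (i + 2)).length := lt_length_self a n hn i
  rw [List.getD_eq_getElem _ _ hi2]
  rcases le_total (i + 2) M with h | h
  · exact (pBlock_prefix a n hn h).getElem hi2
  · exact ((pBlock_prefix a n hn h).getElem hi).symm

lemma prefixWord_eq_take (hn : ∀ k, 2 ≤ n k) (L M : ℕ) (h : L ≤ (pBlock a n M).length) :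
    prefixWord (pInf a n) L = (pBlock a n M).take L := by
  apply List.ext_getElem
  · rw [length_prefixWord, List.length_take]; omega
  · intro i h1 h2
    rw [length_prefixWord] at h1
    simp only [prefixWord, List.getElem_ofFn, List.getElem_take]
    exact pInf_eq_getElem a n hn i M (by omega)

lemma nonoverlap_mem_bddAbove (u v : List A) (hu : 1 ≤ u.length) :
    ∀ m ∈ {m : ℕ | ∃ S : Finset ℕ, S.card = m ∧ (∀ s ∈ S, occursAt u v s) ∧
      ∀ s ∈ S, ∀ t ∈ S, s ≠ t → s + u.length ≤ t ∨ t + u.length ≤ s}, m ≤ v.length := by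
  rintro m ⟨S, rfl, hocc, -⟩
  have hsub : S ⊆ Finset.range v.length := by
    intro s hs
    have := (hocc s hs).1
    exact Finset.mem_range.mpr (by omega)
  calc S.card ≤ (Finset.range v.length).card := Finset.card_le_card hsub
  _ = v.length := Finset.card_range _

lemma nonoverlap_le_length (u v : List A) (hu : 1 ≤ u.length) : nonoverlap u v ≤ v.length := by
  apply csSup_le
  · exact ⟨0, ∅, by simp, by simp, by simp⟩
  · exact nonoverlap_mem_bddAbove u v hu

lemma le_nonoverlap (u v : List A) (hu : 1 ≤ u.length) (S : Finset ℕ)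
    (h1 : ∀ s ∈ S, occursAt u v s)
    (h2 : ∀ s ∈ S, ∀ t ∈ S, s ≠ t → s + u.length ≤ t ∨ t + u.length ≤ s) :
    S.card ≤ nonoverlap u v := by
  apply le_csSup
  · exact ⟨v.length, fun m hm => nonoverlap_mem_bddAbove u v hu m hm⟩
  · exact ⟨S, rfl, h1, h2⟩

end STPQ

open STPQ

/-- The simple Toeplitz word `p^(∞)` satisfies condition (PQ) with constant `1/8`:
for every `j ≥ 1`, `liminf_{L→∞} (j/L)·#_nonoverlap(p^(∞)[1..j], p^(∞)[1..L]) ≥ 1/8`. -/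

theorem simpleToeplitz_PQ {A : Type*} [Fintype A] (a : ℕ → A) (n : ℕ → ℕ)
    (hn : ∀ k, 2 ≤ n k) (j : ℕ) (hj : 1 ≤ j) :
    (1 : ℝ) / 8 ≤ Filter.liminf (fun L : ℕ =>
      (j : ℝ) / (L : ℝ) *
        (nonoverlap (prefixWord (pInf a n) j) (prefixWord (pInf a n) L) : ℝ))
      Filter.atTop := by
  classical
  have hselfell : ∀ k : ℕ, k ≤ ell a n k := fun k => self_le_length a n hn k
  set K := Nat.findGreatest (fun k => ell a n k ≤ j) j with hKdef
  have hK1 : ell a n K ≤ j := by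
    rw [hKdef]
    exact Nat.findGreatest_spec (P := fun k => ell a n k ≤ j) (m := 0) (Nat.zero_le j)
      (show ell a n 0 ≤ j by rw [ell_zero]; exact hj)
  have hK2 : j < ell a n (K+1) := by
    by_contra hc
    push_neg at hc
    have hb : K + 1 ≤ j := le_trans (hselfell (K+1)) hc
    have hgr : Nat.findGreatest (fun k => ell a n k ≤ j) j < K + 1 := by
      rw [← hKdef]
      exact Nat.lt_succ_self K
    exact Nat.findGreatest_is_greatest (P := fun k => ell a n k ≤ j) hgr hb hc
  set ℓ := ell a n K with hℓdef
  have hℓeq : ℓ = (pBlock a n K).length + 1 := rfl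
  have hℓpos : 0 < ℓ := ell_pos a n K
  set m := j / ℓ with hmdef
  have hm1 : 1 ≤ m := (Nat.one_le_div_iff hℓpos).mpr hK1
  have hmul : m * ℓ ≤ j := Nat.div_mul_le_self j ℓ
  have hjm : j < (m+1) * ℓ := by
    have h1 : ℓ * m + j % ℓ = j := by rw [hmdef]; exact Nat.div_add_mod j ℓ
    have h2 := Nat.mod_lt j hℓpos
    have h3 : (m+1) * ℓ = m * ℓ + ℓ := by ring
    have h4 : ℓ * m = m * ℓ := by ring
    omega
  set ℓ1 := ell a n (K+1) with hℓ1def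
  have hℓ1eq : ℓ1 = (pBlock a n (K+1)).length + 1 := rfl
  have hℓ1 : ℓ1 = n K * ℓ := ell_succ a n K (hn K)
  have hℓ1pos : 0 < ℓ1 := ell_pos a n (K+1)
  have hmn : m + 1 ≤ n K := by
    by_contra hc
    push_neg at hc
    have : n K * ℓ ≤ m * ℓ := Nat.mul_le_mul_right _ (by omega)
    omega
  set t := n K / (m+1) with htdef
  have ht1 : 1 ≤ t := (Nat.one_le_div_iff (by omega)).mpr hmn
  have htm : t * (m+1) ≤ n K := Nat.div_mul_le_self _ _
  have hnK2 : n K ≤ 2 * (t * (m+1)) := by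
    have h1 : (m+1) * t + n K % (m+1) = n K := by rw [htdef]; exact Nat.div_add_mod (n K) (m+1)
    have h2 := Nat.mod_lt (n K) (show 0 < m+1 by omega)
    have h3 : (m+1) * t = t * (m+1) := by ring
    have h4 : 1 * (m+1) ≤ t * (m+1) := Nat.mul_le_mul_right _ ht1
    omega
  set u := prefixWord (pInf a n) j with hudef
  have hulen : u.length = j := length_prefixWord _ _
  have hjlen : j ≤ (pBlock a n (K+1)).length := by omega
  have hutake : u = (pBlock a n (K+1)).take j := prefixWord_eq_take a n hn j (K+1) hjlen
  set X := (m+1) * ℓ with hXdef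
  have hXpos : 0 < X := Nat.mul_pos (by omega) hℓpos
  have hjX : j < X := hjm
  have key : ∀ L : ℕ, ℓ1 ≤ L →
      (1:ℝ)/8 ≤ (j:ℝ)/(L:ℝ) * (nonoverlap u (prefixWord (pInf a n) L) : ℝ) := by
    intro L hL
    have hLpos : 0 < L := lt_of_lt_of_le hℓ1pos hL
    set Q := L / ℓ1 with hQdef
    have hQ1 : 1 ≤ Q := (Nat.one_le_div_iff hℓ1pos).mpr hL
    have hQL : Q * ℓ1 ≤ L := Nat.div_mul_le_self _ _
    have hQ2 : L ≤ 2 * (Q * ℓ1) := by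
      have h1 : ℓ1 * Q + L % ℓ1 = L := by rw [hQdef]; exact Nat.div_add_mod L ℓ1
      have h2 := Nat.mod_lt L hℓ1pos
      have h3 : ℓ1 * Q = Q * ℓ1 := by ring
      have h4 : 1 * ℓ1 ≤ Q * ℓ1 := Nat.mul_le_mul_right _ hQ1
      omega
    have hfr : ∀ r, r < t → r * X + X ≤ ℓ1 := by
      intro r hr
      have h5 : (r + 1) * X ≤ t * X := Nat.mul_le_mul_right _ (by omega)
      have h6 : t * X = (t * (m+1)) * ℓ := by rw [hXdef]; ring
      have h7 : (t * (m+1)) * ℓ ≤ n K * ℓ := Nat.mul_le_mul_right _ htm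
      have h8 : (r+1) * X = r * X + X := by ring
      omega
    have hocc : ∀ q, q < Q → ∀ r, r < t →
        occursAt u (prefixWord (pInf a n) L) (q * ℓ1 + r * X) := by
      intro q hq r hr
      have hrX : r * X = (r * (m+1)) * ℓ := by rw [hXdef]; ring
      have hfrr := hfr r hr
      have hin : (r * (m+1)) * ℓ + j ≤ (pBlock a n (K+1)).length := by omega
      have o1 : occursAt u (pBlock a n (K+1)) ((r * (m+1)) * ℓ) := by
        rw [hutake]
        exact occursAt_take_pBlock a n K (hn K) j (r * (m+1)) hin
      obtain ⟨M, hM1, hM2⟩ : ∃ M, q * ℓ1 + (pBlock a n (K+1)).length ≤ (pBlock a n M).length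
          ∧ L ≤ (pBlock a n M).length := by
        refine ⟨q * ℓ1 + (pBlock a n (K+1)).length + L + 1, ?_, ?_⟩ <;>
        · have := self_le_length a n hn (q * ℓ1 + (pBlock a n (K+1)).length + L + 1)
          unfold ell at this
          omega
      have o2 := occursAt_pBlock_mul a n hn M (K+1) q hM1
      rw [← hℓ1def] at o2
      have o3 := occursAt_trans o1 o2
      have hfin : q * ℓ1 + (r * (m+1)) * ℓ + u.length ≤ L := by
        rw [hulen]
        have h9 : (q+1) * ℓ1 ≤ Q * ℓ1 := Nat.mul_le_mul_right _ (by omega)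
        have h10 : (q+1) * ℓ1 = q * ℓ1 + ℓ1 := by ring
        omega
      have o4 := occursAt_take o3 hfin
      rw [← prefixWord_eq_take a n hn L M hM2] at o4
      rw [hrX]
      exact o4
    set f : ℕ × ℕ → ℕ := fun qr => qr.1 * ℓ1 + qr.2 * X with hfdef
    have hinj : Set.InjOn f ((Finset.range Q) ×ˢ (Finset.range t) : Finset (ℕ × ℕ)) := by
      rintro ⟨q,r⟩ hqr ⟨q',r'⟩ hqr' heq
      simp only [Finset.coe_product, Set.mem_prod, Finset.mem_coe, Finset.mem_range] at hqr hqr'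
      obtain ⟨hq, hr⟩ := hqr
      obtain ⟨hq', hr'⟩ := hqr'
      simp only [hfdef] at heq
      have e1 := hfr r hr
      have e2 := hfr r' hr'
      have hqq : q = q' := by
        by_contra hne
        rcases lt_or_gt_of_ne hne with hlt | hlt
        · have g1 : (q+1) * ℓ1 ≤ q' * ℓ1 := Nat.mul_le_mul_right _ hlt
          have g2 : (q+1) * ℓ1 = q * ℓ1 + ℓ1 := by ring
          omega
        · have g1 : (q'+1) * ℓ1 ≤ q * ℓ1 := Nat.mul_le_mul_right _ hlt
          have g2 : (q'+1) * ℓ1 = q' * ℓ1 + ℓ1 := by ring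
          omega
      subst hqq
      have hrr : r * X = r' * X := by omega
      have : r = r' := Nat.eq_of_mul_eq_mul_right hXpos hrr
      simp [this]
    set S := ((Finset.range Q) ×ˢ (Finset.range t)).image f with hSdef
    have hcard : S.card = Q * t := by
      rw [hSdef, Finset.card_image_of_injOn hinj, Finset.card_product,
        Finset.card_range, Finset.card_range]
    have hSocc : ∀ s ∈ S, occursAt u (prefixWord (pInf a n) L) s := by
      intro s hs
      rw [hSdef, Finset.mem_image] at hs
      obtain ⟨⟨q,r⟩, hmem, rfl⟩ := hs
      rw [Finset.mem_product, Finset.mem_range, Finset.mem_range] at hmem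
      exact hocc q hmem.1 r hmem.2
    have step : ∀ q r q' r', q < Q → r < t → q' < Q → r' < t →
        f (q,r) < f (q',r') → f (q,r) + j ≤ f (q',r') := by
      intro q r q' r' hq hr hq' hr' hlt
      simp only [hfdef] at hlt ⊢
      have e1 := hfr r hr
      have e2 := hfr r' hr'
      rcases lt_trichotomy q q' with h | h | h
      · have g1 : (q+1) * ℓ1 ≤ q' * ℓ1 := Nat.mul_le_mul_right _ h
        have g2 : (q+1) * ℓ1 = q * ℓ1 + ℓ1 := by ring
        omega
      · subst h
        have hrr : r < r' := by
          by_contra hc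
          push_neg at hc
          have : r' * X ≤ r * X := Nat.mul_le_mul_right _ hc
          omega
        have g1 : (r+1) * X ≤ r' * X := Nat.mul_le_mul_right _ hrr
        have g2 : (r+1) * X = r * X + X := by ring
        omega
      · exfalso
        have g1 : (q'+1) * ℓ1 ≤ q * ℓ1 := Nat.mul_le_mul_right _ h
        have g2 : (q'+1) * ℓ1 = q' * ℓ1 + ℓ1 := by ring
        omega
    have hSsep : ∀ s ∈ S, ∀ s' ∈ S, s ≠ s' → s + u.length ≤ s' ∨ s' + u.length ≤ s := by
      intro s hs s' hs' hne
      rw [hSdef, Finset.mem_image] at hs hs'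
      obtain ⟨⟨q,r⟩, hmem, rfl⟩ := hs
      obtain ⟨⟨q',r'⟩, hmem', rfl⟩ := hs'
      rw [Finset.mem_product, Finset.mem_range, Finset.mem_range] at hmem hmem'
      rw [hulen]
      rcases lt_or_gt_of_ne hne with hlt | hlt
      · exact Or.inl (step q r q' r' hmem.1 hmem.2 hmem'.1 hmem'.2 hlt)
      · exact Or.inr (step q' r' q r hmem'.1 hmem'.2 hmem.1 hmem.2 hlt)
    have hN : Q * t ≤ nonoverlap u (prefixWord (pInf a n) L) := by
      rw [← hcard]
      exact le_nonoverlap u _ (by omega) S hSocc hSsep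
    have hnat : L ≤ 8 * (j * (Q * t)) := by
      have d2 : Q * ℓ1 = Q * (n K * ℓ) := by rw [hℓ1]
      have d4 : Q * (n K * ℓ) ≤ Q * ((2 * (t * (m+1))) * ℓ) :=
        Nat.mul_le_mul_left _ (Nat.mul_le_mul_right _ hnK2)
      have d5 : m + 1 ≤ 2 * m := by omega
      have d6 : Q * ((2 * (t * (m+1))) * ℓ) ≤ Q * ((2 * (t * (2*m))) * ℓ) :=
        Nat.mul_le_mul_left _ (Nat.mul_le_mul_right _
          (Nat.mul_le_mul_left _ (Nat.mul_le_mul_left _ d5)))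
      have d7 : Q * ((2 * (t * (2*m))) * ℓ) = 4 * (Q * t) * (m * ℓ) := by ring
      have d8 : 4 * (Q * t) * (m * ℓ) ≤ 4 * (Q * t) * j := Nat.mul_le_mul_left _ hmul
      have d9 : 8 * (j * (Q*t)) = 2 * (4 * (Q*t) * j) := by ring
      omega
    rw [div_mul_eq_mul_div, le_div_iff₀ (by exact_mod_cast hLpos)]
    have hcast1 : (L:ℝ) ≤ 8 * ((j:ℝ) * ((Q*t : ℕ):ℝ)) := by exact_mod_cast hnat
    have hcast2 : ((Q*t : ℕ):ℝ) ≤ (nonoverlap u (prefixWord (pInf a n) L) : ℝ) := by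
      exact_mod_cast hN
    have hjnn : (0:ℝ) ≤ (j:ℝ) := by positivity
    nlinarith [mul_le_mul_of_nonneg_left hcast2 hjnn]
  apply Filter.le_liminf_of_le
  · refine Filter.IsBoundedUnder.isCoboundedUnder_ge ⟨(j:ℝ), ?_⟩
    simp only [Filter.eventually_map]
    apply Filter.Eventually.of_forall
    intro L
    rcases Nat.eq_zero_or_pos L with rfl | hLpos
    · simp
    · have hNle : (nonoverlap u (prefixWord (pInf a n) L)) ≤ L := by
        have := nonoverlap_le_length u (prefixWord (pInf a n) L) (by omega)
        rwa [length_prefixWord] at this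
      rw [div_mul_eq_mul_div, div_le_iff₀ (by exact_mod_cast hLpos)]
      have hc1 : (nonoverlap u (prefixWord (pInf a n) L) : ℝ) ≤ (L:ℝ) := by exact_mod_cast hNle
      have hjnn : (0:ℝ) ≤ (j:ℝ) := by positivity
      nlinarith [mul_le_mul_of_nonneg_left hc1 hjnn]
  · filter_upwards [Filter.eventually_ge_atTop ℓ1] with L hL
    exact key L hL
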